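/- Let 0 < r < R < 1. Then the image of the restriction map O(Δ) → O(A(r,R)) is dense in the image of the restriction map O(Δ_R) → O(A(r,R)), where Δ is the unit disc and Δ_R the disc of radius R; in particular, the closure of O(Δ)|_{A(r,R)} in O(A(r,R)) equals the (closed) image of O(Δ_R) under restriction. -/

import Mathlib

open Set Metric Complex Filter Topology MeasureTheory intervalIntegral
open scoped NNReal ENNReal

lemma helper_unif_smul {ι : Type*} {l : Filter ι} {F : ι → ℂ → ℂ} {f k : ℂ → ℂ} {s : Set ℂ}
    {M : ℝ} (hM : 0 ≤ M) (hk : ∀ z ∈ s, ‖k z‖ ≤ M) (hu : TendstoUniformlyOn F f l s) :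
    TendstoUniformlyOn (fun i z => k z * F i z) (fun z => k z * f z) l s := by
  rw [Metric.tendstoUniformlyOn_iff] at hu ⊢
  intro ε hε
  filter_upwards [hu (ε / (M + 1)) (by positivity)] with i hi z hz
  have h1 := hi z hz
  rw [dist_eq_norm] at h1 ⊢
  have he : k z * f z - k z * F i z = k z * (f z - F i z) := by ring
  rw [he, norm_mul]
  calc ‖k z‖ * ‖f z - F i z‖ ≤ M * (ε / (M + 1)) :=
        mul_le_mul (hk z hz) h1.le (norm_nonneg _) hM
    _ < (M + 1) * (ε / (M + 1)) := mul_lt_mul_of_pos_right (lt_add_one M) (by positivity)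
    _ = ε := by rw [mul_comm, div_mul_cancel₀]; positivity

lemma helper_circleIntegral_tendsto {ι : Type*} {l : Filter ι} {F : ι → ℂ → ℂ} {f : ℂ → ℂ}
    {c : ℂ} {ρ : ℝ} (hρ : 0 < ρ)
    (hFc : ∀ᶠ i in l, ContinuousOn (F i) (sphere c ρ))
    (hfc : ContinuousOn f (sphere c ρ))
    (hu : TendstoUniformlyOn F f l (sphere c ρ)) :
    Tendsto (fun i => ∮ z in C(c, ρ), F i z) l (𝓝 (∮ z in C(c, ρ), f z)) := by
  rw [Metric.tendsto_nhds]
  intro ε hε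
  have hδ : 0 < ε / (2 * Real.pi * ρ + 1) := by positivity
  filter_upwards [Metric.tendstoUniformlyOn_iff.1 hu _ hδ, hFc] with i hi hic
  have hint : ∀ g : ℂ → ℂ, ContinuousOn g (sphere c ρ) →
      IntervalIntegrable (fun θ => deriv (circleMap c ρ) θ • g (circleMap c ρ θ))
        volume 0 (2 * Real.pi) := by
    intro g hg
    apply ContinuousOn.intervalIntegrable
    apply ContinuousOn.fun_smul
    · refine Continuous.continuousOn ?_
      have hder : deriv (circleMap c ρ) = fun θ => circleMap 0 ρ θ * Complex.I :=
        funext fun θ => deriv_circleMap c ρ θ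
      rw [hder]
      exact (continuous_circleMap 0 ρ).mul continuous_const
    · exact hg.comp (continuous_circleMap c ρ).continuousOn
        (fun θ _ => circleMap_mem_sphere c hρ.le θ)
  have e1 := hint _ hic
  have e2 := hint _ hfc
  rw [dist_eq_norm, circleIntegral, circleIntegral, ← intervalIntegral.integral_sub e1 e2]
  have bound : ∀ θ ∈ Set.uIoc (0:ℝ) (2 * Real.pi),
      ‖deriv (circleMap c ρ) θ • F i (circleMap c ρ θ)
        - deriv (circleMap c ρ) θ • f (circleMap c ρ θ)‖ ≤ ρ * (ε / (2 * Real.pi * ρ + 1)) := by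
    intro θ _
    rw [← smul_sub, norm_smul]
    have hd : ‖deriv (circleMap c ρ) θ‖ = ρ := by
      simp [deriv_circleMap, _root_.abs_of_pos hρ]
    rw [hd]
    have h2 := hi (circleMap c ρ θ) (circleMap_mem_sphere c hρ.le θ)
    rw [dist_eq_norm] at h2
    exact mul_le_mul_of_nonneg_left (by rw [norm_sub_rev]; exact h2.le) hρ.le
  refine lt_of_le_of_lt (intervalIntegral.norm_integral_le_of_norm_le_const bound) ?_
  calc ρ * (ε / (2 * Real.pi * ρ + 1)) * |2 * Real.pi - 0|
      = 2 * Real.pi * ρ * (ε / (2 * Real.pi * ρ + 1)) := by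
        rw [sub_zero, _root_.abs_of_pos Real.two_pi_pos]; ring
    _ < (2 * Real.pi * ρ + 1) * (ε / (2 * Real.pi * ρ + 1)) :=
        mul_lt_mul_of_pos_right (lt_add_one _) (by positivity)
    _ = ε := by rw [mul_comm, div_mul_cancel₀]; positivity


lemma poly_approx {R : ℝ} (hR0 : 0 < R) {F : ℂ → ℂ}
    (hF : DifferentiableOn ℂ F (Metric.ball (0:ℂ) R)) :
    ∃ u : ℕ → ℂ → ℂ, (∀ n, Differentiable ℂ (u n)) ∧
      ∀ K : Set ℂ, IsCompact K → K ⊆ Metric.ball (0:ℂ) R →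
        TendstoUniformlyOn u F atTop K := by
  have hcb : ∀ {t : ℝ}, 0 < t → t < R →
      HasFPowerSeriesOnBall F (cauchyPowerSeries F 0 t.toNNReal) 0 t.toNNReal := by
    intro t ht htR
    refine DifferentiableOn.hasFPowerSeriesOnBall ?_ (by simpa using ht)
    refine hF.mono ?_
    intro z hz
    rw [Metric.mem_closedBall] at hz
    rw [Metric.mem_ball]
    calc dist z 0 ≤ (t.toNNReal : ℝ) := hz
      _ = t := by rw [Real.coe_toNNReal _ ht.le]
      _ < R := htR
  set p := cauchyPowerSeries F 0 (R/2).toNNReal with hp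
  have h₀ : HasFPowerSeriesOnBall F p 0 (R/2).toNNReal := hcb (by positivity) (by linarith)
  refine ⟨fun n z => p.partialSum n z, ?_, ?_⟩
  · intro n
    have : (fun z => p.partialSum n z) =
        fun z : ℂ => ∑ k ∈ Finset.range n, z ^ k • p.coeff k := by
      funext z
      exact Finset.sum_congr rfl fun k _ => p.apply_eq_pow_smul_coeff
    show Differentiable ℂ fun z => p.partialSum n z
    rw [this]
    exact Differentiable.fun_sum fun k _ => (differentiable_pow k).smul_const _
  · intro K hK hKsub
    rcases K.eq_empty_or_nonempty with rfl | hne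
    · exact tendstoUniformlyOn_empty
    obtain ⟨z₀, hz₀K, hmax⟩ := hK.exists_isMaxOn hne (continuous_norm.continuousOn)
    have hρR : ‖z₀‖ < R := by
      have := hKsub hz₀K; rwa [mem_ball_zero_iff] at this
    set m : ℝ := max ‖z₀‖ (R/2) with hm
    have hmR : m < R := max_lt hρR (by linarith)
    set r' : ℝ := (m + R) / 2 with hr'
    have hmr' : m < r' := by rw [hr']; linarith
    have hr'R : r' < R := by rw [hr']; linarith
    have hr'0 : 0 < r' := lt_of_le_of_lt (le_trans (by positivity) (le_max_right _ _)) hmr'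
    set r'' : ℝ := (m + r') / 2 with hr''
    have hmr'' : m < r'' := by rw [hr'']; linarith
    have hr''r' : r'' < r' := by rw [hr'']; linarith
    have hr''0 : 0 < r'' := lt_of_le_of_lt (le_trans (by positivity) (le_max_right _ _)) hmr''
    have h' : HasFPowerSeriesOnBall F (cauchyPowerSeries F 0 r'.toNNReal) 0 r'.toNNReal :=
      hcb hr'0 hr'R
    have peq : cauchyPowerSeries F 0 r'.toNNReal = p :=
      h'.hasFPowerSeriesAt.eq_formalMultilinearSeries h₀.hasFPowerSeriesAt
    rw [peq] at h'
    have hlt : ((r''.toNNReal : ℝ≥0) : ℝ≥0∞) < (r'.toNNReal : ℝ≥0∞) := by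
      rw [ENNReal.coe_lt_coe]
      rw [← NNReal.coe_lt_coe, Real.coe_toNNReal _ hr''0.le, Real.coe_toNNReal _ hr'0.le]
      exact hr''r'
    have htu := h'.tendstoUniformlyOn' hlt
    simp only [sub_zero] at htu
    refine (htu.mono ?_).congr_right ?_
    · intro z hz
      have h1 : ‖z‖ ≤ ‖z₀‖ := hmax hz
      rw [mem_ball_zero_iff, Real.coe_toNNReal _ hr''0.le]
      exact lt_of_le_of_lt (h1.trans (le_max_left _ _)) hmr''
    · intro z _; rfl



open Set

/-- The holomorphic functions on an open set `U`, viewed as a subset of `C(U, ℂ)`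
(which carries the compact-open topology). -/
def Hol {E : Type*} [NormedAddCommGroup E] [NormedSpace ℂ E] (U : Set E) :
    Set C(U, ℂ) :=
  {f | ∃ F : E → ℂ, DifferentiableOn ℂ F U ∧ ∀ z : U, f z = F z}

/-- For `0 < r < R < 1`, the image of the restriction map `O(Δ) → O(A(r,R))` is dense
in the image of the restriction map `O(Δ_R) → O(A(r,R))`; in fact the closure of
`O(Δ)|_{A(r,R)}` equals the image of `O(Δ_R)` under restriction. -/
theorem stmt_8 (r R : ℝ) (hr : 0 < r) (hrR : r < R) (hR : R < 1) :
    let Δ : Set ℂ := {z | ‖z‖ < 1}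
    let ΔR : Set ℂ := {z | ‖z‖ < R}
    let A : Set ℂ := {z | r < ‖z‖ ∧ ‖z‖ < R}
    let hAΔ : A ⊆ Δ := fun _ hz => lt_trans hz.2 hR
    let hAΔR : A ⊆ ΔR := fun _ hz => hz.2
    let res1 : C(Δ, ℂ) → C(A, ℂ) := fun f =>
      f.comp ⟨Set.inclusion hAΔ, continuous_inclusion hAΔ⟩
    let res2 : C(ΔR, ℂ) → C(A, ℂ) := fun f =>
      f.comp ⟨Set.inclusion hAΔR, continuous_inclusion hAΔR⟩
    res2 '' Hol ΔR ⊆ closure (res1 '' Hol Δ) ∧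
    closure (res1 '' Hol Δ) = res2 '' Hol ΔR := by
  intro Δ ΔR A hAΔ hAΔR res1 res2
  have hR0 : 0 < R := hr.trans hrR
  have hΔR_ball : ΔR = Metric.ball (0:ℂ) R := Set.ext fun z => (mem_ball_zero_iff).symm
  have part1 : res2 '' Hol ΔR ⊆ closure (res1 '' Hol Δ) := by
    rintro g ⟨f₀, ⟨F, hF, hFf₀⟩, rfl⟩
    have hF' : DifferentiableOn ℂ F (Metric.ball (0:ℂ) R) := hΔR_ball ▸ hF
    obtain ⟨u, hud, huK⟩ := poly_approx hR0 hF'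
    set q : ℕ → C(Δ, ℂ) := fun n =>
      ⟨fun z => u n z.1, ((hud n).continuous).comp continuous_subtype_val⟩ with hq
    have hmem : ∀ n, res1 (q n) ∈ res1 '' Hol Δ := fun n =>
      ⟨q n, ⟨u n, (hud n).differentiableOn, fun z => rfl⟩, rfl⟩
    refine mem_closure_of_tendsto (f := fun n => res1 (q n)) (b := atTop) ?_ (Eventually.of_forall hmem)
    rw [ContinuousMap.tendsto_iff_forall_isCompact_tendstoUniformlyOn]
    intro K hK
    have hL : IsCompact (Subtype.val '' K : Set ℂ) := hK.image continuous_subtype_val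
    have hLsub : (Subtype.val '' K : Set ℂ) ⊆ Metric.ball (0:ℂ) R := by
      rintro z ⟨x, _, rfl⟩
      exact mem_ball_zero_iff.2 x.2.2
    have htu := (huK _ hL hLsub).comp (Subtype.val : A → ℂ)
    refine (htu.mono ?_).congr_right ?_
    · intro x hx
      exact ⟨x, hx, rfl⟩
    · intro x _
      exact (hFf₀ (Set.inclusion hAΔR x)).symm
  refine ⟨part1, ?_⟩
  refine Subset.antisymm ?_ part1
  intro g hg
  rw [mem_closure_iff_nhdsWithin_neBot] at hg
  set S := res1 '' Hol Δ with hS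
  set l := 𝓝[S] g with hl
  haveI hnb : l.NeBot := hg
  classical
  have hexists : ∀ f ∈ S, ∃ F : ℂ → ℂ, DifferentiableOn ℂ F Δ ∧ ∀ x : A, f x = F x.1 := by
    rintro f ⟨f₀, ⟨F, hF, hFf₀⟩, rfl⟩
    exact ⟨F, hF, fun x => hFf₀ (Set.inclusion hAΔ x)⟩
  set Ef : C(A, ℂ) → ℂ → ℂ := fun f =>
    if h : ∃ F : ℂ → ℂ, DifferentiableOn ℂ F Δ ∧ ∀ x : A, f x = F x.1 then h.choose else 0
    with hEfdef
  have hEf : ∀ f ∈ S, DifferentiableOn ℂ (Ef f) Δ ∧ ∀ x : A, f x = Ef f x.1 := by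
    intro f hf
    have h := hexists f hf
    simp only [hEfdef, dif_pos h]
    exact h.choose_spec
  set gc : ℂ → ℂ := fun w => if h : w ∈ A then g ⟨w, h⟩ else 0 with hgcdef
  have hgc : ∀ x : A, gc x.1 = g x := by
    intro x
    simp only [hgcdef, dif_pos x.2]
  have hgcont : ContinuousOn gc A := by
    rw [continuousOn_iff_continuous_restrict]
    have : A.domRestrict gc = fun x : A => g x := funext fun x => hgc x
    rw [this]
    exact g.continuous
  have hAΔ' : A ⊆ Δ := hAΔ
  have hsphere : ∀ ρ' ∈ Ioo r R, Metric.sphere (0:ℂ) ρ' ⊆ A := by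
    intro ρ' hρ' z hz
    rw [mem_sphere_zero_iff_norm] at hz
    exact ⟨hz ▸ hρ'.1, hz ▸ hρ'.2⟩
  have hunif : ∀ ρ' ∈ Ioo r R,
      TendstoUniformlyOn (fun (f : C(A, ℂ)) z => Ef f z) gc l (Metric.sphere (0:ℂ) ρ') := by
    intro ρ' hρ'
    have hid : Tendsto (fun f : C(A, ℂ) => f) l (𝓝 g) :=
      Filter.Tendsto.mono_left tendsto_id nhdsWithin_le_nhds
    set K : Set A := (fun z : Metric.sphere (0:ℂ) ρ' => (⟨z.1, hsphere ρ' hρ' z.2⟩ : A)) '' univ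
      with hKdef
    have hKc : IsCompact K :=
      isCompact_univ.image (Continuous.subtype_mk continuous_subtype_val _)
    have huK := ContinuousMap.tendsto_iff_forall_isCompact_tendstoUniformlyOn.1 hid K hKc
    rw [Metric.tendstoUniformlyOn_iff] at huK ⊢
    intro ε hε
    filter_upwards [huK ε hε, self_mem_nhdsWithin] with f h1f hfS
    intro z hz
    have hzA : z ∈ A := hsphere ρ' hρ' hz
    have hzK : (⟨z, hzA⟩ : A) ∈ K := ⟨⟨z, hz⟩, mem_univ _, rfl⟩
    have h2 := h1f ⟨z, hzA⟩ hzK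
    have e1 : gc z = g ⟨z, hzA⟩ := hgc ⟨z, hzA⟩
    have e2 : Ef f z = f ⟨z, hzA⟩ := ((hEf f hfS).2 ⟨z, hzA⟩).symm
    rw [e1, e2]
    exact h2
  set G : ℝ → ℂ → ℂ := fun ρ' w =>
    (2 * Real.pi * Complex.I : ℂ)⁻¹ • ∮ z in C(0, ρ'), (z - w)⁻¹ • gc z with hGdef
  have key : ∀ ρ' ∈ Ioo r R, ∀ w : ℂ, ‖w‖ < ρ' →
      Tendsto (fun f : C(A, ℂ) => Ef f w) l (𝓝 (G ρ' w)) := by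
    intro ρ' hρ' w hw
    have hρ'0 : 0 < ρ' := hr.trans hρ'.1
    have hw0 : 0 < ρ' - ‖w‖ := by linarith
    have hker : ∀ z ∈ Metric.sphere (0:ℂ) ρ', ‖(z - w)⁻¹‖ ≤ (ρ' - ‖w‖)⁻¹ := by
      intro z hz
      rw [mem_sphere_zero_iff_norm] at hz
      rw [norm_inv]
      refine inv_anti₀ hw0 ?_
      calc ρ' - ‖w‖ = ‖z‖ - ‖w‖ := by rw [hz]
        _ ≤ ‖z - w‖ := norm_sub_norm_le z w
    have hu2 : TendstoUniformlyOn (fun (f : C(A, ℂ)) z => (z - w)⁻¹ * Ef f z)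
        (fun z => (z - w)⁻¹ * gc z) l (Metric.sphere (0:ℂ) ρ') :=
      helper_unif_smul (by positivity) hker (hunif ρ' hρ')
    have hkercont : ContinuousOn (fun z : ℂ => (z - w)⁻¹) (Metric.sphere (0:ℂ) ρ') := by
      refine ContinuousOn.inv₀ ((continuous_id.sub continuous_const).continuousOn) ?_
      intro z hz
      rw [mem_sphere_zero_iff_norm] at hz
      refine sub_ne_zero.2 ?_
      intro hzw
      rw [hzw] at hz
      exact absurd hz (ne_of_lt hw)
    have hFc : ∀ᶠ f : C(A, ℂ) in l,
        ContinuousOn (fun z => (z - w)⁻¹ * Ef f z) (Metric.sphere (0:ℂ) ρ') := by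
      filter_upwards [self_mem_nhdsWithin] with f hf
      exact hkercont.mul (((hEf f hf).1.continuousOn).mono
        ((hsphere ρ' hρ').trans hAΔ'))
    have hfc : ContinuousOn (fun z => (z - w)⁻¹ * gc z) (Metric.sphere (0:ℂ) ρ') :=
      hkercont.mul (hgcont.mono (hsphere ρ' hρ'))
    have hci := helper_circleIntegral_tendsto hρ'0 hFc hfc hu2
    have htends := hci.const_smul ((2 * Real.pi * Complex.I : ℂ)⁻¹)
    have hGw : G ρ' w = (2 * Real.pi * Complex.I : ℂ)⁻¹ •
        ∮ z in C(0, ρ'), (z - w)⁻¹ * gc z := by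
      simp only [hGdef, smul_eq_mul]
    rw [hGw]
    refine Tendsto.congr' ?_ htends
    filter_upwards [self_mem_nhdsWithin] with f hf
    have hdiff := (hEf f hf).1
    have hsub2 : Metric.closedBall (0:ℂ) ρ' ⊆ Δ := by
      intro z hz
      rw [Metric.mem_closedBall, dist_zero_right] at hz
      show ‖z‖ < 1
      have := hρ'.2
      linarith
    have hdc : DiffContOnCl ℂ (Ef f) (Metric.ball (0:ℂ) ρ') :=
      ⟨hdiff.mono (Metric.ball_subset_closedBall.trans hsub2),
        (hdiff.continuousOn).mono (closure_ball_subset_closedBall.trans hsub2)⟩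
    have hcau := hdc.two_pi_i_inv_smul_circleIntegral_sub_inv_smul (mem_ball_zero_iff.2 hw)
    exact hcau
  set ρfun : ℂ → ℝ := fun w => (max r ‖w‖ + R) / 2 with hρfundef
  have hρfun : ∀ w : ℂ, ‖w‖ < R → ρfun w ∈ Ioo r R ∧ ‖w‖ < ρfun w := by
    intro w hw
    have h1 : r ≤ max r ‖w‖ := le_max_left _ _
    have h2 : ‖w‖ ≤ max r ‖w‖ := le_max_right _ _
    have h3 : max r ‖w‖ < R := max_lt hrR hw
    refine ⟨⟨?_, ?_⟩, ?_⟩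
    · show r < (max r ‖w‖ + R) / 2; linarith
    · show (max r ‖w‖ + R) / 2 < R; linarith
    · show ‖w‖ < (max r ‖w‖ + R) / 2; linarith
  set Ffin : ℂ → ℂ := fun w => if h : ‖w‖ < R then G (ρfun w) w else 0 with hFfindef
  have hFlim : ∀ w : ℂ, ‖w‖ < R → Tendsto (fun f : C(A, ℂ) => Ef f w) l (𝓝 (Ffin w)) := by
    intro w hw
    have h := hρfun w hw
    have he : Ffin w = G (ρfun w) w := by simp only [hFfindef, dif_pos hw]
    rw [he]
    exact key _ h.1 w h.2
  have hcons : ∀ ρ' ∈ Ioo r R, ∀ w : ℂ, ‖w‖ < ρ' → Ffin w = G ρ' w := by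
    intro ρ' hρ' w hw
    exact tendsto_nhds_unique (hFlim w (hw.trans hρ'.2)) (key ρ' hρ' w hw)
  have hFdiff : DifferentiableOn ℂ Ffin ΔR := by
    intro z₀ hz₀
    have hz₀' : ‖z₀‖ < R := hz₀
    have h := hρfun z₀ hz₀'
    have hρ'0 : 0 < ρfun z₀ := hr.trans h.1.1
    have hint' : CircleIntegrable gc 0 (((ρfun z₀).toNNReal : ℝ≥0) : ℝ) := by
      rw [Real.coe_toNNReal _ hρ'0.le]
      exact ContinuousOn.circleIntegrable hρ'0.le (hgcont.mono (hsphere _ h.1))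
    have hps := hasFPowerSeriesOn_cauchy_integral hint' (Real.toNNReal_pos.2 hρ'0)
    have hGdiff : DifferentiableOn ℂ (G (ρfun z₀)) (Metric.ball (0:ℂ) (ρfun z₀)) := by
      have hd := hps.differentiableOn
      rw [Metric.emetric_ball_nnreal] at hd
      have he : (fun w => (2 * Real.pi * Complex.I : ℂ)⁻¹ •
          ∮ z in C(0, (((ρfun z₀).toNNReal : ℝ≥0) : ℝ)), (z - w)⁻¹ • gc z) = G (ρfun z₀) := by
        funext w
        rw [Real.coe_toNNReal _ hρ'0.le]
      rw [he, Real.coe_toNNReal _ hρ'0.le] at hd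
      exact hd
    have hcongr : DifferentiableOn ℂ Ffin (Metric.ball (0:ℂ) (ρfun z₀)) := by
      refine hGdiff.congr ?_
      intro w hw
      exact hcons _ h.1 w (mem_ball_zero_iff.1 hw)
    exact (hcongr.differentiableAt
      (isOpen_ball.mem_nhds (mem_ball_zero_iff.2 h.2))).differentiableWithinAt
  have hval : ∀ x : A, g x = Ffin x.1 := by
    intro x
    have h1 : Tendsto (fun f : C(A, ℂ) => f x) l (𝓝 (g x)) :=
      ((continuous_eval_const x).tendsto g).mono_left nhdsWithin_le_nhds
    have h3 : (fun f : C(A, ℂ) => f x) =ᶠ[l] fun f => Ef f x.1 := by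
      filter_upwards [self_mem_nhdsWithin] with f hf
      exact (hEf f hf).2 x
    have h4 : Tendsto (fun f : C(A, ℂ) => Ef f x.1) l (𝓝 (g x)) := h1.congr' h3
    exact tendsto_nhds_unique h4 (hFlim x.1 x.2.2)
  have hcont : Continuous fun z : ΔR => Ffin z.1 :=
    continuousOn_iff_continuous_restrict.1 hFdiff.continuousOn
  exact ⟨⟨fun z => Ffin z.1, hcont⟩, ⟨Ffin, hFdiff, fun z => rfl⟩,
    ContinuousMap.ext fun x => (hval x).symm⟩
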